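/- Let T = (V,E) be a tree with at least 3 edges and no internal vertex of degree 2, and let {u,v} ∈ E with deg(u) = 3 (u internal). Then the inequality x_{{u,v}} ≥ 0 is redundant: the set P_T ∩ { x : x_{{u,v}} = 0 } is not a facet of P_T, and the inequality x_{{u,v}} ≥ 0 is implied by the inequalities −x_{{u,w}} + ∑_{w' ∈ N(u)\{w}} x_{{u,w'}} ≥ 0 over the three neighbors w of u. -/

import Mathlib

open Classical SimpleGraph

noncomputable section

variable {V : Type*}

/-- A leaf: a vertex with exactly one neighbor. -/
def IsLeaf (G : SimpleGraph V) (v : V) : Prop := ∃! w, G.Adj v w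

/-- `e` is an edge on the (unique, for trees) path between `i` and `j`. -/
def onPath (G : SimpleGraph V) (i j : V) (e : Sym2 V) : Prop :=
  ∃ p : G.Walk i j, p.IsPath ∧ e ∈ p.edges

/-- The edge indicator vector `c^{i↔j}` of the path between `i` and `j`. -/
def pathVec (G : SimpleGraph V) (i j : V) : Sym2 V → ℝ :=
  fun e => if onPath G i j e then 1 else 0

/-- The path polytope `P_T`: the convex hull of the indicator vectors of the
paths between pairs of distinct leaves. -/
def pathPolytope (G : SimpleGraph V) : Set (Sym2 V → ℝ) :=
  convexHull ℝ {x | ∃ i j : V, i ≠ j ∧ IsLeaf G i ∧ IsLeaf G j ∧ x = pathVec G i j}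

/-- `E_leaf(T)`: edges incident to at least one leaf. -/
def leafEdges (G : SimpleGraph V) : Set (Sym2 V) :=
  {e | e ∈ G.edgeSet ∧ ∃ v ∈ e, IsLeaf G v}

/-- A face of `P`: the intersection of `P` with the boundary hyperplane of a valid
linear inequality. -/
def IsFaceOf {E : Type*} [AddCommGroup E] [Module ℝ E] (P F : Set E) : Prop :=
  ∃ (a : E →ₗ[ℝ] ℝ) (b : ℝ), (∀ x ∈ P, a x ≤ b) ∧ F = {x ∈ P | a x = b}

/-- The dimension of a polytope: the rank of the direction of its affine span. -/
def polyDim {E : Type*} [AddCommGroup E] [Module ℝ E] (P : Set E) : ℕ :=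
  Module.finrank ℝ (affineSpan ℝ P).direction

/-- A facet: a face of dimension `dim P − 1`. -/
def IsFacetOf {E : Type*} [AddCommGroup E] [Module ℝ E] (P F : Set E) : Prop :=
  IsFaceOf P F ∧ polyDim F + 1 = polyDim P

/-! ### Auxiliary lemmas -/

section AuxLemmas

variable {G : SimpleGraph V}

/-- In a path starting at `u`, any edge containing `u` is the first edge. -/
lemma edge_start {u a x : V} (h : G.Adj u a) (q : G.Walk a x)
    (hp : (Walk.cons h q).IsPath) {e : Sym2 V} (he : e ∈ (Walk.cons h q).edges)
    (hue : u ∈ e) : e = s(u, a) := by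
  rw [Walk.edges_cons, List.mem_cons] at he
  rcases he with rfl | he
  · rfl
  · exfalso
    obtain ⟨z, rfl⟩ : ∃ z, e = s(u, z) := Sym2.mem_iff_exists.mp hue
    have : u ∈ q.support := q.fst_mem_support_of_mem_edges he
    exact ((Walk.cons_isPath_iff h q).mp hp).2 this

/-- An internal vertex of a path meets at least two distinct edges of the path. -/
lemma exists_other_edge {i j u w : V} (p : G.Walk i j) (hp : p.IsPath)
    (hui : u ≠ i) (huj : u ≠ j) (he : s(u, w) ∈ p.edges) :
    ∃ w', G.Adj u w' ∧ w' ≠ w ∧ s(u, w') ∈ p.edges := by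
  classical
  have hu : u ∈ p.support := p.fst_mem_support_of_mem_edges he
  have hqn : ¬ ((p.takeUntil u hu).reverse).Nil := Walk.not_nil_of_ne hui
  obtain ⟨a', haa, q', hq'⟩ := Walk.not_nil_iff.mp hqn
  have hrn : ¬ (p.dropUntil u hu).Nil := Walk.not_nil_of_ne huj
  obtain ⟨b', hbb, r', hr'⟩ := Walk.not_nil_iff.mp hrn
  have hma0 : s(u, a') ∈ (p.takeUntil u hu).edges := by
    rw [← List.mem_reverse, ← Walk.edges_reverse, hq', Walk.edges_cons]
    exact List.mem_cons_self
  have hmb0 : s(u, b') ∈ (p.dropUntil u hu).edges := by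
    rw [hr', Walk.edges_cons]; exact List.mem_cons_self
  have hma : s(u, a') ∈ p.edges := Walk.edges_takeUntil_subset p hu hma0
  have hmb : s(u, b') ∈ p.edges := Walk.edges_dropUntil_subset p hu hmb0
  have hab : a' ≠ b' := by
    intro h
    subst h
    have hnd : ((p.takeUntil u hu).edges ++ (p.dropUntil u hu).edges).Nodup := by
      rw [← Walk.edges_append, Walk.take_spec p hu]
      exact hp.isTrail.edges_nodup
    exact (List.nodup_append'.mp hnd).2.2 hma0 hmb0
  by_cases hwa : a' = w
  · exact ⟨b', hbb, fun hbw => hab (by rw [hwa, hbw]), hmb⟩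
  · exact ⟨a', haa, hwa, hma⟩

/-- Concatenating a path with a fresh vertex is a path. -/
lemma isPath_concat {x y z : V} {p : G.Walk x y} (hp : p.IsPath) (h : G.Adj y z)
    (hz : z ∉ p.support) : (p.concat h).IsPath := by
  rw [Walk.isPath_def, Walk.support_concat]
  exact List.Nodup.append hp.support_nodup (List.nodup_singleton z)
    (fun a ha hb => by rw [List.mem_singleton] at hb; subst hb; exact hz ha)

/-- In a finite tree, every edge at `u` extends to a path from `u` to a leaf. -/
lemma exists_leaf_walk [Fintype V] (hG : G.IsTree) {u a : V} (hua : G.Adj u a) :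
    ∃ (i : V) (q : G.Walk a i), (Walk.cons hua q).IsPath ∧ IsLeaf G i := by
  classical
  have ext : ∀ (i : V) (q : G.Walk a i), (Walk.cons hua q).IsPath → ¬ IsLeaf G i →
      ∃ z, G.Adj i z ∧ z ∉ (Walk.cons hua q).support := by
    intro i q hq hleaf
    set p := Walk.cons hua q with hpdef
    have hpn : ¬ p.reverse.Nil := by
      rw [Walk.nil_iff_length_eq, Walk.length_reverse]
      simp [hpdef]
    obtain ⟨y, hiy, r, hrev⟩ := Walk.not_nil_iff.mp hpn
    have hedge : ∀ e ∈ p.edges, i ∈ e → e = s(i, y) := by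
      intro e he hie
      have hrp : p.reverse.IsPath := hq.reverse
      rw [hrev] at hrp
      refine edge_start hiy r hrp ?_ hie
      rw [← hrev, Walk.edges_reverse, List.mem_reverse]
      exact he
    simp only [IsLeaf, ExistsUnique, not_exists, not_and, not_forall] at hleaf
    obtain ⟨z, hiz, hzy⟩ := hleaf y hiy
    refine ⟨z, hiz, fun hz => ?_⟩
    have hniz : s(i, z) ∉ p.edges := fun h =>
      hzy (Sym2.congr_right.mp (hedge _ h (Sym2.mem_iff.mpr (Or.inl rfl))))
    have htp : (p.dropUntil z hz).IsPath := hq.dropUntil hz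
    have hte : s(i, z) ∉ (p.dropUntil z hz).edges := fun h =>
      hniz (Walk.edges_dropUntil_subset p hz h)
    have hcyc : (Walk.cons hiz (p.dropUntil z hz)).IsCycle :=
      (Walk.cons_isCycle_iff _ hiz).mpr ⟨htp, hte⟩
    exact hG.IsAcyclic _ hcyc
  have key : ∀ (k : ℕ) (i : V) (q : G.Walk a i), (Walk.cons hua q).IsPath →
      Fintype.card V ≤ (Walk.cons hua q).support.length + k →
      ∃ (i' : V) (q' : G.Walk a i'), (Walk.cons hua q').IsPath ∧ IsLeaf G i' := by
    intro k
    induction k with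
    | zero =>
      intro i q hq hcard
      by_cases hleaf : IsLeaf G i
      · exact ⟨i, q, hq, hleaf⟩
      · exfalso
        obtain ⟨z, hiz, hz⟩ := ext i q hq hleaf
        have hnodup := hq.support_nodup
        have hlen : (Walk.cons hua q).support.length = Fintype.card V :=
          le_antisymm hnodup.length_le_card (by simpa using hcard)
        have : (Walk.cons hua q).support.toFinset = Finset.univ := by
          apply Finset.eq_univ_of_card
          rw [List.toFinset_card_of_nodup hnodup, hlen]
        exact hz (by rw [← List.mem_toFinset, this]; exact Finset.mem_univ z)
    | succ k ih =>
      intro i q hq hcard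
      by_cases hleaf : IsLeaf G i
      · exact ⟨i, q, hq, hleaf⟩
      · obtain ⟨z, hiz, hz⟩ := ext i q hq hleaf
        have hq' : (Walk.cons hua (q.concat hiz)).IsPath := by
          rw [← Walk.concat_cons]
          exact isPath_concat hq hiz hz
        refine ih z (q.concat hiz) hq' ?_
        have : (Walk.cons hua (q.concat hiz)).support.length
            = (Walk.cons hua q).support.length + 1 := by
          rw [← Walk.concat_cons, Walk.support_concat,
            List.length_append]
          simp
        omega
  exact key (Fintype.card V) a Walk.nil
    (by rw [Walk.cons_isPath_iff]; simpa using hua.ne)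
    (by simp)

/-- In a tree, two paths from `u` to the same vertex have the same first edge. -/
lemma path_eq_head (hG : G.IsTree) {u a b i : V} (ha : G.Adj u a) (hb : G.Adj u b)
    {qa : G.Walk a i} {qb : G.Walk b i} (hpa : (Walk.cons ha qa).IsPath)
    (hpb : (Walk.cons hb qb).IsPath) : a = b := by
  have h := (hG.existsUnique_path u i).unique hpa hpb
  have h2 := congrArg Walk.edges h
  rw [Walk.edges_cons, Walk.edges_cons] at h2
  exact Sym2.congr_right.mp (List.head_eq_of_cons_eq h2)

/-- Two branches at `u` in a tree meet only at `u`. -/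
lemma branch_disjoint (hG : G.IsTree) {u a b : V} (ha : G.Adj u a) (hb : G.Adj u b)
    (hab : a ≠ b) {x y : V} {qa : G.Walk a x} {qb : G.Walk b y}
    (hpa : (Walk.cons ha qa).IsPath) (hpb : (Walk.cons hb qb).IsPath) :
    ∀ z, z ∈ (Walk.cons ha qa).support → z ∈ (Walk.cons hb qb).support → z = u := by
  classical
  intro z hza hzb
  by_contra hzu
  have hza' : z ∈ qa.support := by
    rw [Walk.support_cons] at hza
    rcases List.mem_cons.mp hza with rfl | h
    · exact absurd rfl hzu
    · exact h
  have hzb' : z ∈ qb.support := by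
    rw [Walk.support_cons] at hzb
    rcases List.mem_cons.mp hzb with rfl | h
    · exact absurd rfl hzu
    · exact h
  have hta : (Walk.cons ha (qa.takeUntil z hza')).IsPath := by
    rw [Walk.cons_isPath_iff]
    refine ⟨(hpa.of_cons).takeUntil hza', fun hu => ?_⟩
    exact ((Walk.cons_isPath_iff ha qa).mp hpa).2 (Walk.support_takeUntil_subset _ hza' hu)
  have htb : (Walk.cons hb (qb.takeUntil z hzb')).IsPath := by
    rw [Walk.cons_isPath_iff]
    refine ⟨(hpb.of_cons).takeUntil hzb', fun hu => ?_⟩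
    exact ((Walk.cons_isPath_iff hb qb).mp hpb).2 (Walk.support_takeUntil_subset _ hzb' hu)
  exact hab (path_eq_head hG ha hb hta htb)

/-- Gluing two paths from `u` meeting only at `u` gives a path. -/
lemma rev_append_isPath {u x y : V} {p : G.Walk u x} {q : G.Walk u y}
    (hp : p.IsPath) (hq : q.IsPath)
    (hdisj : ∀ z, z ∈ p.support → z ∈ q.support → z = u) :
    (p.reverse.append q).IsPath := by
  rw [Walk.isPath_def, Walk.support_append, Walk.support_reverse]
  have h1 : p.support.reverse.Nodup := List.nodup_reverse.mpr hp.support_nodup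
  have hq' := hq.support_nodup
  rw [q.support_eq_cons] at hq'
  obtain ⟨hu_tail, htail⟩ := List.nodup_cons.mp hq'
  refine List.Nodup.append h1 htail fun z hz1 hz2 => ?_
  have hz : z = u := hdisj z (List.mem_reverse.mp hz1) (List.mem_of_mem_tail hz2)
  subst hz
  exact hu_tail hz2

/-- For a tree, the path vector is the indicator of the edges of any fixed path. -/
lemma pathVec_eq_ite (hG : G.IsTree) {i j : V} (p : G.Walk i j) (hp : p.IsPath)
    (e : Sym2 V) : pathVec G i j e = if e ∈ p.edges then 1 else 0 := by
  unfold pathVec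
  by_cases he : e ∈ p.edges
  · rw [if_pos he, if_pos ⟨p, hp, he⟩]
  · rw [if_neg he, if_neg]
    rintro ⟨q, hq, heq⟩
    exact he (((hG.existsUnique_path i j).unique hq hp) ▸ heq)

/-- Values of the path vector between leaves in two distinct branches at `u`. -/
lemma pair_values (hG : G.IsTree) {u c d e' : V} (hc : G.Adj u c) (hd : G.Adj u d)
    (hec : e' ≠ c) (hed : e' ≠ d)
    {ic idd : V} {qc : G.Walk c ic} {qd : G.Walk d idd}
    (hpc : (Walk.cons hc qc).IsPath) (hpd : (Walk.cons hd qd).IsPath)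
    (hdisj : ∀ z, z ∈ (Walk.cons hc qc).support → z ∈ (Walk.cons hd qd).support → z = u) :
    pathVec G ic idd s(u, c) = 1 ∧ pathVec G ic idd s(u, d) = 1 ∧
      pathVec G ic idd s(u, e') = 0 := by
  classical
  set P := (Walk.cons hc qc).reverse.append (Walk.cons hd qd) with hPdef
  have hP : P.IsPath := rev_append_isPath hpc hpd hdisj
  have hmem : ∀ e : Sym2 V, e ∈ P.edges ↔
      e ∈ (Walk.cons hc qc).edges ∨ e ∈ (Walk.cons hd qd).edges := by
    intro e
    rw [hPdef, Walk.edges_append, List.mem_append, Walk.edges_reverse, List.mem_reverse]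
  have h1 : s(u, c) ∈ P.edges := by
    rw [hmem]; left; rw [Walk.edges_cons]; exact List.mem_cons_self
  have h2 : s(u, d) ∈ P.edges := by
    rw [hmem]; right; rw [Walk.edges_cons]; exact List.mem_cons_self
  have h3 : s(u, e') ∉ P.edges := by
    rw [hmem]
    rintro (h | h)
    · exact hec (Sym2.congr_right.mp
        (edge_start hc qc hpc h (Sym2.mem_iff.mpr (Or.inl rfl))))
    · exact hed (Sym2.congr_right.mp
        (edge_start hd qd hpd h (Sym2.mem_iff.mpr (Or.inl rfl))))
  refine ⟨?_, ?_, ?_⟩ <;> rw [pathVec_eq_ite hG P hP]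
  · rw [if_pos h1]
  · rw [if_pos h2]
  · rw [if_neg h3]

/-- A degree-three vertex. -/
lemma three_neighbors {u v : V} (huv : G.Adj u v)
    (hu3 : (G.neighborSet u).ncard = 3) :
    ∃ a b, G.Adj u a ∧ G.Adj u b ∧ v ≠ a ∧ v ≠ b ∧ a ≠ b ∧
      G.neighborSet u = {v, a, b} := by
  obtain ⟨x, y, z, hxy, hxz, hyz, hset⟩ := Set.ncard_eq_three.mp hu3
  have hadj : ∀ w ∈ ({x, y, z} : Set V), G.Adj u w := by
    intro w hw
    rw [← hset] at hw
    exact hw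
  have hv : v ∈ ({x, y, z} : Set V) := by rw [← hset]; exact huv
  simp only [Set.mem_insert_iff, Set.mem_singleton_iff] at hv
  rcases hv with rfl | rfl | rfl
  · exact ⟨y, z, hadj y (by simp), hadj z (by simp), hxy, hxz, hyz, hset⟩
  · refine ⟨x, z, hadj x (by simp), hadj z (by simp), hxy.symm, hyz, hxz, ?_⟩
    rw [hset]; ext w
    simp only [Set.mem_insert_iff, Set.mem_singleton_iff]; tauto
  · refine ⟨x, y, hadj x (by simp), hadj y (by simp), hxz.symm, hyz.symm, hxy, ?_⟩
    rw [hset]; ext w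
    simp only [Set.mem_insert_iff, Set.mem_singleton_iff]; tauto

/-- The degree inequality is valid on the path polytope. -/
lemma vertex_ineq (hG : G.IsTree) {u w c d : V} (hnl : ¬ IsLeaf G u)
    (hset : G.neighborSet u = {w, c, d}) :
    ∀ x ∈ pathPolytope G, x s(u, w) ≤ x s(u, c) + x s(u, d) := by
  intro x hx
  have hconv : Convex ℝ {x : Sym2 V → ℝ | x s(u, w) ≤ x s(u, c) + x s(u, d)} := by
    have hlin : IsLinearMap ℝ
        (fun y : Sym2 V → ℝ => y s(u, w) - y s(u, c) - y s(u, d)) := by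
      constructor
      · intro y z; simp only [Pi.add_apply]; ring
      · intro t y; simp only [Pi.smul_apply, smul_eq_mul]; ring
    have hcv := convex_halfSpace_le hlin 0
    have heq : {x : Sym2 V → ℝ | x s(u, w) ≤ x s(u, c) + x s(u, d)} =
        {y : Sym2 V → ℝ | y s(u, w) - y s(u, c) - y s(u, d) ≤ 0} := by
      ext y
      simp only [Set.mem_setOf_eq]
      constructor <;> intro <;> linarith
    rw [heq]
    exact hcv
  refine convexHull_min ?_ hconv hx
  rintro y ⟨i, j, hij, hli, hlj, rfl⟩
  obtain ⟨p, hp, -⟩ := hG.existsUnique_path i j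
  have hui : u ≠ i := fun h => hnl (by rw [h]; exact hli)
  have huj : u ≠ j := fun h => hnl (by rw [h]; exact hlj)
  simp only [Set.mem_setOf_eq]
  rw [pathVec_eq_ite hG p hp, pathVec_eq_ite hG p hp, pathVec_eq_ite hG p hp]
  by_cases hw : s(u, w) ∈ p.edges
  · rw [if_pos hw]
    obtain ⟨w', hw', hne, hmem⟩ := exists_other_edge p hp hui huj hw
    have hwin : w' ∈ ({w, c, d} : Set V) := by rw [← hset]; exact hw'
    simp only [Set.mem_insert_iff, Set.mem_singleton_iff] at hwin
    rcases hwin with rfl | rfl | rfl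
    · exact absurd rfl hne
    · rw [if_pos hmem]
      have : (0 : ℝ) ≤ if s(u, d) ∈ p.edges then 1 else 0 := by split_ifs <;> norm_num
      linarith
    · rw [if_pos hmem]
      have : (0 : ℝ) ≤ if s(u, c) ∈ p.edges then 1 else 0 := by split_ifs <;> norm_num
      linarith
  · rw [if_neg hw]
    split_ifs <;> norm_num

end AuxLemmas

/-- At an edge `{u,v}` whose endpoint `u` is internal of degree 3, the
inequality `x_{u,v} ≥ 0` is redundant: `P_T ∩ {x_{u,v} = 0}` is not a facet of `P_T`, and
`x_{u,v} ≥ 0` is implied by the three inequalities at `u`. -/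
theorem degree_three_redundant [Fintype V] (G : SimpleGraph V)
    (hG : G.IsTree) (hE : 3 ≤ G.edgeSet.ncard)
    (hdeg2 : ∀ w, ¬ IsLeaf G w → (G.neighborSet w).ncard ≠ 2)
    (u v : V) (huv : G.Adj u v) (hu3 : (G.neighborSet u).ncard = 3) :
    ¬ IsFacetOf (pathPolytope G) (pathPolytope G ∩ {x | x s(u, v) = 0}) ∧
    (∀ x : Sym2 V → ℝ,
      (∀ w ∈ G.neighborSet u,
        0 ≤ - x s(u, w) + ∑ᶠ w' ∈ G.neighborSet u \ {w}, x s(u, w')) →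
      0 ≤ x s(u, v)) := by
  classical
  obtain ⟨a, b, ha, hb, hva, hvb, hab, hset⟩ := three_neighbors huv hu3
  have hdiffa : G.neighborSet u \ {a} = {v, b} := by
    rw [hset]; ext z
    simp only [Set.mem_diff, Set.mem_insert_iff, Set.mem_singleton_iff]
    constructor
    · rintro ⟨(rfl | rfl | rfl), h2⟩ <;> tauto
    · rintro (rfl | rfl) <;> exact ⟨by tauto, by tauto⟩
  have hdiffb : G.neighborSet u \ {b} = {v, a} := by
    rw [hset]; ext z
    simp only [Set.mem_diff, Set.mem_insert_iff, Set.mem_singleton_iff]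
    constructor
    · rintro ⟨(rfl | rfl | rfl), h2⟩ <;> tauto
    · rintro (rfl | rfl) <;> exact ⟨by tauto, by tauto⟩
  have hnl : ¬ IsLeaf G u := by
    rintro ⟨w, hw, huniq⟩
    have hsing : G.neighborSet u = {w} := by
      ext z
      simp only [mem_neighborSet, Set.mem_singleton_iff]
      exact ⟨fun hz => huniq z hz, fun hz => hz ▸ hw⟩
    rw [hsing, Set.ncard_singleton] at hu3
    norm_num at hu3
  constructor
  · -- not a facet
    rintro ⟨-, hdim⟩
    -- the three branch leaves
    obtain ⟨iv, qv, hpv, hlv⟩ := exists_leaf_walk hG huv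
    obtain ⟨ia, qa, hpa, hla⟩ := exists_leaf_walk hG ha
    obtain ⟨ib, qb, hpb, hlb⟩ := exists_leaf_walk hG hb
    have hne_va : iv ≠ ia := by rintro rfl; exact hva (path_eq_head hG huv ha hpv hpa)
    have hne_vb : iv ≠ ib := by rintro rfl; exact hvb (path_eq_head hG huv hb hpv hpb)
    have hne_ab : ia ≠ ib := by rintro rfl; exact hab (path_eq_head hG ha hb hpa hpb)
    have Hva := pair_values hG huv ha hvb.symm hab.symm hpv hpa
      (branch_disjoint hG huv ha hva hpv hpa)
    have Hvb := pair_values hG huv hb hva.symm (Ne.symm hab.symm) hpv hpb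
      (branch_disjoint hG huv hb hvb hpv hpb)
    have Hab := pair_values hG ha hb hva hvb hpa hpb
      (branch_disjoint hG ha hb hab hpa hpb)
    have hxva : pathVec G iv ia ∈ pathPolytope G :=
      subset_convexHull ℝ _ ⟨iv, ia, hne_va, hlv, hla, rfl⟩
    have hxvb : pathVec G iv ib ∈ pathPolytope G :=
      subset_convexHull ℝ _ ⟨iv, ib, hne_vb, hlv, hlb, rfl⟩
    have hxab : pathVec G ia ib ∈ pathPolytope G :=
      subset_convexHull ℝ _ ⟨ia, ib, hne_ab, hla, hlb, rfl⟩
    -- the valid inequalities at `u`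
    have hsa : G.neighborSet u = {a, v, b} := by
      rw [hset]; ext z
      simp only [Set.mem_insert_iff, Set.mem_singleton_iff]; tauto
    have hsb : G.neighborSet u = {b, v, a} := by
      rw [hset]; ext z
      simp only [Set.mem_insert_iff, Set.mem_singleton_iff]; tauto
    have ineqa := vertex_ineq hG hnl hsa
    have ineqb := vertex_ineq hG hnl hsb
    -- the linear functional
    set f : (Sym2 V → ℝ) →ₗ[ℝ] ℝ × ℝ :=
      (LinearMap.proj s(u, v) : (Sym2 V → ℝ) →ₗ[ℝ] ℝ).prod
        ((LinearMap.proj s(u, a) : (Sym2 V → ℝ) →ₗ[ℝ] ℝ) - LinearMap.proj s(u, b))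
      with hfdef
    have hfapp : ∀ x : Sym2 V → ℝ, f x = (x s(u, v), x s(u, a) - x s(u, b)) :=
      fun x => rfl
    have hfF : ∀ x ∈ pathPolytope G ∩ {x | x s(u, v) = 0}, f x = 0 := by
      rintro x ⟨hxP, hx0⟩
      simp only [Set.mem_setOf_eq] at hx0
      have i1 := ineqa x hxP
      have i2 := ineqb x hxP
      rw [hfapp, hx0, Prod.mk_eq_zero]
      exact ⟨rfl, by linarith⟩
    have hfva : f (pathVec G iv ia) = (1, 1) := by
      rw [hfapp, Hva.1, Hva.2.1, Hva.2.2]; norm_num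
    have hfvb : f (pathVec G iv ib) = (1, -1) := by
      rw [hfapp, Hvb.1, Hvb.2.2, Hvb.2.1]; norm_num
    have hfab : f (pathVec G ia ib) = (0, 0) := by
      rw [hfapp, Hab.1, Hab.2.1, Hab.2.2]; norm_num
    set W := (affineSpan ℝ (pathPolytope G)).direction with hWdef
    have hW1 : pathVec G iv ia - pathVec G ia ib ∈ W := by
      have := AffineSubspace.vsub_mem_direction
        (subset_affineSpan ℝ _ hxva) (subset_affineSpan ℝ _ hxab)
      simpa using this
    have hW2 : pathVec G iv ib - pathVec G ia ib ∈ W := by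
      have := AffineSubspace.vsub_mem_direction
        (subset_affineSpan ℝ _ hxvb) (subset_affineSpan ℝ _ hxab)
      simpa using this
    set g : W →ₗ[ℝ] ℝ × ℝ := f.comp W.subtype with hgdef
    have hg1 : g ⟨_, hW1⟩ = (1, 1) := by
      simp only [hgdef, LinearMap.comp_apply, Submodule.subtype_apply]
      rw [map_sub, hfva, hfab]
      norm_num
    have hg2 : g ⟨_, hW2⟩ = (1, -1) := by
      simp only [hgdef, LinearMap.comp_apply, Submodule.subtype_apply]
      rw [map_sub, hfvb, hfab]
      norm_num
    have hrange : LinearMap.range g = ⊤ := by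
      rw [eq_top_iff]
      rintro ⟨s, t⟩ -
      have hrepr : ((s, t) : ℝ × ℝ) =
          ((s + t) / 2) • ((1, 1) : ℝ × ℝ) + ((s - t) / 2) • ((1, -1) : ℝ × ℝ) := by
        simp only [Prod.smul_mk, smul_eq_mul, Prod.mk_add_mk, Prod.mk.injEq]
        constructor <;> ring
      rw [hrepr]
      exact Submodule.add_mem _
        (Submodule.smul_mem _ _ ⟨_, hg1⟩)
        (Submodule.smul_mem _ _ ⟨_, hg2⟩)
    have hrn := g.finrank_range_add_finrank_ker
    rw [hrange, finrank_top] at hrn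
    have h2dim : Module.finrank ℝ (ℝ × ℝ) = 2 := by
      rw [Module.finrank_prod, Module.finrank_self]
    have hker_eq : Module.finrank ℝ (LinearMap.ker g)
        = Module.finrank ℝ (W ⊓ LinearMap.ker f : Submodule ℝ (Sym2 V → ℝ)) := by
      have hkc : LinearMap.ker g = Submodule.comap W.subtype (LinearMap.ker f) :=
        LinearMap.ker_comp _ _
      rw [hkc, ← Submodule.map_comap_subtype]
      exact (Submodule.equivMapOfInjective W.subtype (Submodule.injective_subtype W)
        _).finrank_eq
    have hle : (affineSpan ℝ (pathPolytope G ∩ {x | x s(u, v) = 0})).direction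
        ≤ W ⊓ LinearMap.ker f := by
      refine le_inf (AffineSubspace.direction_le (affineSpan_mono ℝ
        Set.inter_subset_left)) ?_
      rw [direction_affineSpan, vectorSpan_def]
      refine Submodule.span_le.mpr ?_
      rintro x' hx'
      obtain ⟨p1, hp1, p2, hp2, rfl⟩ := Set.mem_vsub.mp hx'
      simp only [SetLike.mem_coe, LinearMap.mem_ker, vsub_eq_sub, map_sub,
        hfF p1 hp1, hfF p2 hp2, sub_zero]
    have hfinF : Module.finrank ℝ
        (affineSpan ℝ (pathPolytope G ∩ {x | x s(u, v) = 0})).direction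
        ≤ Module.finrank ℝ (W ⊓ LinearMap.ker f : Submodule ℝ (Sym2 V → ℝ)) :=
      Submodule.finrank_mono hle
    have hdim' : Module.finrank ℝ
        (affineSpan ℝ (pathPolytope G ∩ {x | x s(u, v) = 0})).direction + 1
        = Module.finrank ℝ W := hdim
    rw [h2dim, hker_eq] at hrn
    have h5 : Module.finrank ℝ (W ⊓ LinearMap.ker f : Submodule ℝ (Sym2 V → ℝ)) + 2
        = Module.finrank ℝ W := by rw [Nat.add_comm]; exact hrn
    have hcontr : Module.finrank ℝ
        (affineSpan ℝ (pathPolytope G ∩ {x | x s(u, v) = 0})).direction + 2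
        ≤ Module.finrank ℝ W := h5 ▸ Nat.add_le_add_right hfinF 2
    rw [← hdim'] at hcontr
    exact Nat.lt_irrefl _ (lt_of_lt_of_le (Nat.lt_succ_self _) hcontr)
  · -- the inequality is implied
    intro x hx
    have h1 := hx a ((G.mem_neighborSet u a).mpr ha)
    have h2 := hx b ((G.mem_neighborSet u b).mpr hb)
    rw [hdiffa, finsum_mem_pair hvb] at h1
    rw [hdiffb, finsum_mem_pair hva] at h2
    linarith
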